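/- The sets Ŝ_{π,π'} are nonempty for every pair of fixed-point-free involutions π, π' of {1,...,N}: in fact there exists a finite (non-affine) permutation s ∈ S_N with s·π = π' admitting a reduced-type word f_{i_k}···f_{i_1} in which no letter f_{i_ℓ} is applied to an involution fixing the pair (i_ℓ, i_ℓ+1). -/

import Mathlib

/- STATEMENT 10: for any two fixed-point-free involutions π, π' of {1,...,N}
(N even) there is a finite permutation s ∈ S_N with s·π·s⁻¹ = π' admitting a
word in adjacent transpositions in which no letter is applied to an involution
containing the little arch (i_ℓ, i_ℓ+1); in particular the sets Ŝ_{π,π'} are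
nonempty. -/

noncomputable section

variable (N : ℕ) [NeZero N]

/-- The adjacent transposition `f_i = (i, i+1)` of `{1,...,N}` (only used for
`i` with `i+1 < N`). -/
def adjT (i : Fin N) : Equiv.Perm (Fin N) := Equiv.swap i (i + 1)

/-- The product `f_{i_k} ⋯ f_{i_1}` of the word `l = [i_k, …, i_1]`. -/
def wordProdFin (l : List (Fin N)) : Equiv.Perm (Fin N) := (l.map (adjT N)).prod

/-- The word `l = [i_k, …, i_1]` is tadpole-free for `π`: at no step `ℓ` does
`f_{i_{ℓ-1}} ⋯ f_{i_1}·π` (conjugation action) map `i_ℓ` to `i_ℓ + 1`. -/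
def TadFreeFin (π : Equiv.Perm (Fin N)) : List (Fin N) → Prop
  | [] => True
  | i :: rest => TadFreeFin π rest ∧
      (wordProdFin N rest * π * (wordProdFin N rest)⁻¹) i ≠ i + 1

/-- canonical pairing values -/
def canonV (j : ℕ) : ℕ := if j % 2 = 0 then j + 1 else j - 1

lemma finAddOneVal (i : Fin N) (h : (i:ℕ)+1 < N) : ((i+1 : Fin N):ℕ) = (i:ℕ)+1 := by
  have h1 : ((1 : Fin N) : ℕ) = 1 % N := Fin.val_one' N
  have h2 : 1 % N = 1 := Nat.mod_eq_of_lt (by omega)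
  rw [Fin.val_add, h1, h2, Nat.mod_eq_of_lt (by omega)]

lemma wordProd_nil : wordProdFin N [] = 1 := by simp [wordProdFin]

lemma wordProd_single (i : Fin N) : wordProdFin N [i] = adjT N i := by simp [wordProdFin]

lemma wordProd_append (l₂ l₁ : List (Fin N)) :
    wordProdFin N (l₂ ++ l₁) = wordProdFin N l₂ * wordProdFin N l₁ := by
  simp [wordProdFin]

lemma wordProd_cons (i : Fin N) (l : List (Fin N)) :
    wordProdFin N (i :: l) = adjT N i * wordProdFin N l := by
  simp [wordProdFin]

lemma tadfree_append (π : Equiv.Perm (Fin N)) (l₂ l₁ : List (Fin N)) :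
    TadFreeFin N π (l₂ ++ l₁) ↔ TadFreeFin N π l₁ ∧
      TadFreeFin N (wordProdFin N l₁ * π * (wordProdFin N l₁)⁻¹) l₂ := by
  induction l₂ with
  | nil => simp [TadFreeFin]
  | cons i t ih =>
      have hw : wordProdFin N (t ++ l₁) * π * (wordProdFin N (t ++ l₁))⁻¹ =
          wordProdFin N t * (wordProdFin N l₁ * π * (wordProdFin N l₁)⁻¹) *
            (wordProdFin N t)⁻¹ := by
        rw [wordProd_append, mul_inv_rev]; group
      simp only [List.cons_append, TadFreeFin, List.append_eq, ih, hw]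
      tauto

lemma arch_conj (σ : Equiv.Perm (Fin N)) (hσ : ∀ x, σ (σ x) = x) (i : Fin N) :
    (adjT N i * σ * (adjT N i)⁻¹) i = i + 1 ↔ σ i = i + 1 := by
  unfold adjT
  rw [Equiv.swap_inv]
  simp only [Equiv.Perm.mul_apply, Equiv.swap_apply_left]
  constructor
  · intro h
    have h2 : σ (i + 1) = i := by
      have : Equiv.swap i (i+1) (σ (i+1)) = Equiv.swap i (i+1) i := by
        rw [h, Equiv.swap_apply_left]
      exact (Equiv.swap i (i+1)).injective this
    have := hσ (i + 1)
    rwa [h2] at this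
  · intro h
    have h2 : σ (i + 1) = i := by rw [← h, hσ]
    rw [h2, Equiv.swap_apply_left]

lemma tadfree_reverse (π : Equiv.Perm (Fin N)) (hπ : ∀ x, π (π x) = x)
    (l : List (Fin N)) (h : TadFreeFin N π l) :
    TadFreeFin N (wordProdFin N l * π * (wordProdFin N l)⁻¹) l.reverse := by
  induction l with
  | nil => simp [wordProd_nil, TadFreeFin]
  | cons i t ih =>
      obtain ⟨ht, hi⟩ := h
      set w := wordProdFin N t with hwdef
      have hinv : ∀ x, (w * π * w⁻¹) ((w * π * w⁻¹) x) = x := by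
        intro x
        simp [Equiv.Perm.mul_apply, hπ]
      have hρ : wordProdFin N (i :: t) * π * (wordProdFin N (i :: t))⁻¹ =
          adjT N i * (w * π * w⁻¹) * (adjT N i)⁻¹ := by
        rw [wordProd_cons, mul_inv_rev]; group; rfl
      rw [hρ, List.reverse_cons, tadfree_append]
      constructor
      · refine ⟨trivial, ?_⟩
        rw [wordProd_nil]
        simp only [one_mul, mul_one, inv_one]
        intro hcon
        exact hi ((arch_conj N (w * π * w⁻¹) hinv i).mp hcon)
      · have hback : wordProdFin N [i] * (adjT N i * (w * π * w⁻¹) * (adjT N i)⁻¹) *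
            (wordProdFin N [i])⁻¹ = w * π * w⁻¹ := by
          rw [wordProd_single]
          have hf2 : adjT N i * adjT N i = 1 := by
            unfold adjT; exact Equiv.swap_mul_self _ _
          calc adjT N i * (adjT N i * (w * π * w⁻¹) * (adjT N i)⁻¹) * (adjT N i)⁻¹
              = (adjT N i * adjT N i) * (w * π * w⁻¹) * (adjT N i * adjT N i)⁻¹ := by
                group
            _ = w * π * w⁻¹ := by rw [hf2]; simp
        rw [hback]
        exact ih ht

lemma canonV_lt (j m : ℕ) (hj : j < m) (hm : m % 2 = 0) : canonV j < m := by
  unfold canonV; split <;> omega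

lemma sort_aux (hN2 : N % 2 = 0) :
    ∀ (μ m : ℕ) (σ : Equiv.Perm (Fin N)), m % 2 = 0 →
    (∀ x, σ (σ x) = x) → (∀ x, σ x ≠ x) →
    (∀ j : Fin N, (j : ℕ) < m → ((σ j : Fin N) : ℕ) = canonV j) →
    (N - m) * N + (if h : m < N then ((σ ⟨m, h⟩ : Fin N) : ℕ) else 0) ≤ μ →
    ∃ l : List (Fin N), (∀ i ∈ l, (i : ℕ) + 1 < N) ∧ TadFreeFin N σ l ∧
      ∀ j : Fin N, (((wordProdFin N l * σ * (wordProdFin N l)⁻¹) j : Fin N) : ℕ) = canonV j := by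
  have hNpos : 0 < N := Nat.pos_of_ne_zero (NeZero.ne N)
  intro μ
  induction μ with
  | zero =>
      intro m σ hm hσ hσf hst hmeas
      by_cases hmN : m < N
      · exfalso
        rw [dif_pos hmN] at hmeas
        have : 1 * N ≤ (N - m) * N := Nat.mul_le_mul_right _ (by omega)
        omega
      · refine ⟨[], by simp, trivial, ?_⟩
        intro j
        rw [wordProd_nil]
        simp only [one_mul, mul_one, inv_one]
        exact hst j (by omega)
  | succ μ ih =>
      intro m σ hm hσ hσf hst hmeas
      by_cases hmN : m < N
      · rw [dif_pos hmN] at hmeas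
        set a : Fin N := σ ⟨m, hmN⟩ with hadef
        have hσa : σ a = ⟨m, hmN⟩ := hσ ⟨m, hmN⟩
        -- a.val ≥ m + 1
        have ham : m + 1 ≤ (a : ℕ) := by
          by_contra hc
          push_neg at hc
          have hne : (a : ℕ) ≠ m := by
            intro he
            exact hσf ⟨m, hmN⟩ (by rw [← hadef]; exact Fin.ext he)
          have halt : (a : ℕ) < m := by omega
          have := hst a halt
          rw [hσa] at this
          simp only [canonV] at this
          split at this <;> omega
        by_cases hcase : (a : ℕ) = m + 1
        · -- sorted extends to m + 2
          have hst2 : ∀ j : Fin N, (j : ℕ) < m + 2 → ((σ j : Fin N) : ℕ) = canonV j := by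
            intro j hj
            rcases Nat.lt_or_ge (j : ℕ) m with h | h
            · exact hst j h
            rcases Nat.eq_or_lt_of_le h with h' | h'
            · have : j = ⟨m, hmN⟩ := Fin.ext h'.symm
              rw [this, ← hadef, hcase]
              simp only [canonV]
              rw [if_pos hm]
            · have hjm1 : (j : ℕ) = m + 1 := by omega
              have : j = a := Fin.ext (by omega)
              rw [this, hσa]
              simp only [canonV, hjm1]
              rw [if_neg (by omega)]
              omega
          have hNm : m + 2 ≤ N := by omega
          have hmeas2 : (N - (m + 2)) * N +
              (if h : m + 2 < N then ((σ ⟨m + 2, h⟩ : Fin N) : ℕ) else 0) ≤ μ := by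
            have hsplit : (N - m) * N = (N - (m + 2)) * N + 2 * N := by
              have : N - m = (N - (m + 2)) + 2 := by omega
              rw [this, add_mul]
            by_cases h2 : m + 2 < N
            · rw [dif_pos h2]
              have : ((σ ⟨m + 2, h2⟩ : Fin N) : ℕ) < N := (σ ⟨m + 2, h2⟩).isLt
              omega
            · rw [dif_neg h2]; omega
          exact ih (m + 2) σ (by omega) hσ hσf hst2 hmeas2
        · -- a > m + 1 : push a down by one
          have haN : (a : ℕ) < N := a.isLt
          have hgoal : (N - m) * N + ((a : ℕ) - 1) ≤ μ := by omega
          set i : Fin N := ⟨(a : ℕ) - 1, by omega⟩ with hidef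
          have hi1 : (i : ℕ) + 1 < N := by simp only [hidef]; omega
          have hiadd : i + 1 = a := by
            apply Fin.ext
            rw [finAddOneVal N i hi1]
            simp only [hidef]
            omega
          set f := adjT N i with hfdef
          have hfinv : f⁻¹ = f := by rw [hfdef]; unfold adjT; exact Equiv.swap_inv _ _
          set σ' := f * σ * f⁻¹ with hσ'def
          have happ : ∀ x, σ' x = f (σ (f x)) := by
            intro x
            rw [hσ'def, hfinv]
            simp [Equiv.Perm.mul_apply]
          have hff : ∀ x, f (f x) = x := by
            intro x
            rw [hfdef]; unfold adjT; exact Equiv.swap_apply_self _ _ _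
          have hσ'inv : ∀ x, σ' (σ' x) = x := by
            intro x
            rw [happ, happ, hff, hσ, hff]
          have hσ'f : ∀ x, σ' x ≠ x := by
            intro x hx
            rw [happ] at hx
            have : σ (f x) = f x := by
              have := congrArg f hx
              rwa [hff] at this
            exact hσf (f x) this
          -- f fixes everything with val < m, and val = m
          have hffix : ∀ x : Fin N, (x : ℕ) < m + 1 → f x = x := by
            intro x hx
            rw [hfdef]; unfold adjT
            apply Equiv.swap_apply_of_ne_of_ne
            · intro he; rw [he] at hx; simp only [hidef] at hx; omega
            · rw [hiadd]; intro he; rw [he] at hx; omega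
          have hst' : ∀ j : Fin N, (j : ℕ) < m → ((σ' j : Fin N) : ℕ) = canonV j := by
            intro j hj
            rw [happ, hffix j (by omega)]
            have h1 := hst j hj
            have h2 : ((σ j : Fin N) : ℕ) < m := by
              rw [h1]; exact canonV_lt _ _ hj hm
            rw [hffix (σ j) (by omega), h1]
          have hσ'm : σ' ⟨m, hmN⟩ = i := by
            rw [happ, hffix ⟨m, hmN⟩ (by exact Nat.lt_succ_self m), ← hadef]
            rw [hfdef]; unfold adjT
            rw [hiadd]
            exact Equiv.swap_apply_right _ _
          have hmeas' : (N - m) * N +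
              (if h : m < N then ((σ' ⟨m, h⟩ : Fin N) : ℕ) else 0) ≤ μ := by
            rw [dif_pos hmN, hσ'm]
            exact hgoal
          obtain ⟨l, hlb, hltf, hlval⟩ := ih m σ' hm hσ'inv hσ'f hst' hmeas'
          refine ⟨l ++ [i], ?_, ?_, ?_⟩
          · intro x hx
            rcases List.mem_append.mp hx with h | h
            · exact hlb x h
            · simp only [List.mem_singleton] at h; rw [h]; exact hi1
          · rw [tadfree_append]
            constructor
            · refine ⟨trivial, ?_⟩
              rw [wordProd_nil]
              simp only [one_mul, mul_one, inv_one]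
              rw [hiadd]
              intro hcon
              have : σ a = i := by rw [← hcon, hσ]
              rw [hσa] at this
              have : m = (i : ℕ) := congrArg Fin.val this
              simp only [hidef] at this
              omega
            · have : wordProdFin N [i] * σ * (wordProdFin N [i])⁻¹ = σ' := by
                rw [wordProd_single, hσ'def, hfdef]
              rw [this]
              exact hltf
          · intro j
            have hkey : wordProdFin N (l ++ [i]) * σ * (wordProdFin N (l ++ [i]))⁻¹ =
                wordProdFin N l * σ' * (wordProdFin N l)⁻¹ := by
              rw [wordProd_append, wordProd_single, hσ'def, hfdef, mul_inv_rev]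
              group
            rw [hkey]
            exact hlval j
      · refine ⟨[], by simp, trivial, ?_⟩
        intro j
        rw [wordProd_nil]
        simp only [one_mul, mul_one, inv_one]
        exact hst j (by omega)


/-- Nonemptiness of `Ŝ_{π,π'}`: a finite tadpole-free word conjugating π to π'
always exists. -/
theorem exists_tadpole_free_word (hN : ∃ n, N = 2 * n)
    (π π' : Equiv.Perm (Fin N))
    (hπ : ∀ x, π (π x) = x) (hπf : ∀ x, π x ≠ x)
    (hπ' : ∀ x, π' (π' x) = x) (hπ'f : ∀ x, π' x ≠ x) :
    ∃ (s : Equiv.Perm (Fin N)) (l : List (Fin N)),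
      (∀ i ∈ l, (i : ℕ) + 1 < N) ∧
      s = wordProdFin N l ∧
      s * π * s⁻¹ = π' ∧
      TadFreeFin N π l := by
  have hNpos : 0 < N := Nat.pos_of_ne_zero (NeZero.ne N)
  have hN2 : N % 2 = 0 := by obtain ⟨n, rfl⟩ := hN; omega
  have hstart : ∀ (σ : Equiv.Perm (Fin N)), (∀ x, σ (σ x) = x) → (∀ x, σ x ≠ x) →
      ∃ l : List (Fin N), (∀ i ∈ l, (i : ℕ) + 1 < N) ∧ TadFreeFin N σ l ∧
        ∀ j : Fin N, (((wordProdFin N l * σ * (wordProdFin N l)⁻¹) j : Fin N) : ℕ) = canonV j := by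
    intro σ hσ hσf
    apply sort_aux N hN2 (N * N + N) 0 σ (by omega) hσ hσf (by intro j hj; omega)
    rw [dif_pos hNpos]
    have h1 : (N - 0) * N = N * N := by simp
    have h2 : ((σ ⟨0, hNpos⟩ : Fin N) : ℕ) < N := (σ _).isLt
    omega
  obtain ⟨l, hlb, hltf, hlval⟩ := hstart π hπ hπf
  obtain ⟨l', hlb', hltf', hlval'⟩ := hstart π' hπ' hπ'f
  set w := wordProdFin N l with hwdef
  set w' := wordProdFin N l' with hw'def
  have heq : w * π * w⁻¹ = w' * π' * w'⁻¹ := by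
    apply Equiv.ext
    intro j
    exact Fin.ext ((hlval j).trans (hlval' j).symm)
  -- product over the reversed word is the inverse
  have hrev : ∀ (t : List (Fin N)), wordProdFin N t.reverse = (wordProdFin N t)⁻¹ := by
    intro t
    induction t with
    | nil => simp [wordProd_nil]
    | cons i tl ihp =>
        have hswp : (adjT N i)⁻¹ = adjT N i := by
          unfold adjT; exact Equiv.swap_inv _ _
        rw [List.reverse_cons, wordProd_append, ihp, wordProd_single, wordProd_cons,
          mul_inv_rev, hswp]
  refine ⟨wordProdFin N (l'.reverse ++ l), l'.reverse ++ l, ?_, rfl, ?_, ?_⟩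
  · intro x hx
    rcases List.mem_append.mp hx with h | h
    · exact hlb' x (List.mem_reverse.mp h)
    · exact hlb x h
  · rw [wordProd_append, hrev, ← hwdef, ← hw'def, mul_inv_rev]
    calc w'⁻¹ * w * π * (w⁻¹ * w'⁻¹⁻¹) = w'⁻¹ * (w * π * w⁻¹) * w' := by group
    _ = w'⁻¹ * (w' * π' * w'⁻¹) * w' := by rw [heq]
    _ = π' := by group
  · rw [tadfree_append]
    refine ⟨hltf, ?_⟩
    rw [← hwdef, heq]
    exact tadfree_reverse N π' hπ' l' hltf'

end
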